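/- Assume A > B > C > 0 and let M², E > 0 satisfy M²/A < E < M²/B (lower branch case). Define k² = (B−C)(AE−M²)/((A−B)(M²−CE)), a² = A(M²−CE)/(A−C), b² = B(AE−M²)/(A−B), c² = C(AE−M²)/(A−C), ν² = (A−B)(M²−CE)/(ABC). Then 0 < k² < 1, and for any t₀ ∈ ℝ the functions M₁(t) = a·dn(ν(t−t₀), k), M₂(t) = b·sn(ν(t−t₀), k), M₃(t) = c·cn(ν(t−t₀), k) (with signs chosen so that abcν > 0) satisfy the Euler top equations Ṁ₁ = (1/B − 1/C)M₂M₃, Ṁ₂ = (1/C − 1/A)M₃M₁, Ṁ₃ = (1/A − 1/B)M₁M₂. -/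

import Mathlib

lemma eq_of_sq_eq_aux (x y : ℝ) (h2 : x ^ 2 = y ^ 2) (hpos : 0 < x * y) : x = y := by
  have h0 : (x - y) * (x + y) = 0 := by nlinarith
  rcases mul_eq_zero.mp h0 with h | h
  · linarith
  · nlinarith

/-- In the lower-branch case `M²/A < E < M²/B`, one has `0 < k² < 1`, and the
elliptic functions `M₁ = a·dn(ν(t−t₀))`, `M₂ = b·sn(ν(t−t₀))`, `M₃ = c·cn(ν(t−t₀))`
solve the Euler top equations. -/
theorem euler_top_elliptic_solution_lower_branch
    (A B C : ℝ) (hAB : A > B) (hBC : B > C) (hC : C > 0)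
    (Msq E : ℝ) (hMsq : Msq > 0) (hE : E > 0)
    (hlow1 : Msq / A < E) (hlow2 : E < Msq / B)
    (k a b c ν : ℝ)
    (hk : k ^ 2 = (B - C) * (A * E - Msq) / ((A - B) * (Msq - C * E)))
    (ha : a ^ 2 = A * (Msq - C * E) / (A - C))
    (hb : b ^ 2 = B * (A * E - Msq) / (A - B))
    (hc : c ^ 2 = C * (A * E - Msq) / (A - C))
    (hν : ν ^ 2 = (A - B) * (Msq - C * E) / (A * B * C))
    (hsign : a * b * c * ν > 0)
    (sn cn dn : ℝ → ℝ)
    (hsn' : ∀ u, HasDerivAt sn (cn u * dn u) u)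
    (hcn' : ∀ u, HasDerivAt cn (-(sn u * dn u)) u)
    (hdn' : ∀ u, HasDerivAt dn (-(k ^ 2 * sn u * cn u)) u)
    (hpy1 : ∀ u, sn u ^ 2 + cn u ^ 2 = 1)
    (hpy2 : ∀ u, dn u ^ 2 + k ^ 2 * sn u ^ 2 = 1)
    (t₀ : ℝ) :
    (0 < k ^ 2 ∧ k ^ 2 < 1) ∧
      ∀ t,
        HasDerivAt (fun s => a * dn (ν * (s - t₀)))
          ((1 / B - 1 / C) * (b * sn (ν * (t - t₀))) * (c * cn (ν * (t - t₀)))) t ∧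
        HasDerivAt (fun s => b * sn (ν * (s - t₀)))
          ((1 / C - 1 / A) * (c * cn (ν * (t - t₀))) * (a * dn (ν * (t - t₀)))) t ∧
        HasDerivAt (fun s => c * cn (ν * (s - t₀)))
          ((1 / A - 1 / B) * (a * dn (ν * (t - t₀))) * (b * sn (ν * (t - t₀)))) t := by
  have hB : B > 0 := lt_trans hC hBC
  have hA : A > 0 := lt_trans hB hAB
  have hAmB : A - B > 0 := by linarith
  have hBmC : B - C > 0 := by linarith
  have hAmC : A - C > 0 := by linarith
  have h1 : A * E - Msq > 0 := by
    have := (div_lt_iff₀ hA).mp hlow1; nlinarith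
  have h3 : Msq - B * E > 0 := by
    have := (lt_div_iff₀ hB).mp hlow2; nlinarith
  have h2 : Msq - C * E > 0 := by nlinarith
  have hkpos : 0 < k ^ 2 := by
    rw [hk]; exact div_pos (mul_pos hBmC h1) (mul_pos hAmB h2)
  have hklt : k ^ 2 < 1 := by
    rw [hk, div_lt_one (mul_pos hAmB h2)]; nlinarith
  -- coefficient identities
  have e1 : a * ν * k ^ 2 = (1 / C - 1 / B) * (b * c) := by
    apply eq_of_sq_eq_aux
    · have : (a * ν * k ^ 2) ^ 2 = a ^ 2 * ν ^ 2 * (k ^ 2) ^ 2 := by ring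
      rw [this, ha, hν, hk]
      have : ((1 / C - 1 / B) * (b * c)) ^ 2 = (1 / C - 1 / B) ^ 2 * (b ^ 2 * c ^ 2) := by ring
      rw [this, hb, hc]
      field_simp
    · have hcoef : 0 < k ^ 2 * (1 / C - 1 / B) := by
        apply mul_pos hkpos
        have : (1:ℝ) / B < 1 / C := one_div_lt_one_div_of_lt hC hBC
        linarith
      calc (0:ℝ) < k ^ 2 * (1 / C - 1 / B) * (a * b * c * ν) := mul_pos hcoef hsign
      _ = a * ν * k ^ 2 * ((1 / C - 1 / B) * (b * c)) := by ring
  have e2 : b * ν = (1 / C - 1 / A) * (c * a) := by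
    apply eq_of_sq_eq_aux
    · have : (b * ν) ^ 2 = b ^ 2 * ν ^ 2 := by ring
      rw [this, hb, hν]
      have : ((1 / C - 1 / A) * (c * a)) ^ 2 = (1 / C - 1 / A) ^ 2 * (c ^ 2 * a ^ 2) := by ring
      rw [this, hc, ha]
      field_simp
    · have hcoef : 0 < (1 / C - 1 / A) := by
        have : (1:ℝ) / A < 1 / C := one_div_lt_one_div_of_lt hC (lt_trans hBC hAB)
        linarith
      calc (0:ℝ) < (1 / C - 1 / A) * (a * b * c * ν) := mul_pos hcoef hsign
      _ = b * ν * ((1 / C - 1 / A) * (c * a)) := by ring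
  have e3 : c * ν = (1 / B - 1 / A) * (a * b) := by
    apply eq_of_sq_eq_aux
    · have : (c * ν) ^ 2 = c ^ 2 * ν ^ 2 := by ring
      rw [this, hc, hν]
      have : ((1 / B - 1 / A) * (a * b)) ^ 2 = (1 / B - 1 / A) ^ 2 * (a ^ 2 * b ^ 2) := by ring
      rw [this, ha, hb]
      field_simp
    · have hcoef : 0 < (1 / B - 1 / A) := by
        have : (1:ℝ) / A < 1 / B := one_div_lt_one_div_of_lt hB hAB
        linarith
      calc (0:ℝ) < (1 / B - 1 / A) * (a * b * c * ν) := mul_pos hcoef hsign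
      _ = c * ν * ((1 / B - 1 / A) * (a * b)) := by ring
  refine ⟨⟨hkpos, hklt⟩, fun t => ?_⟩
  have hin : HasDerivAt (fun s => ν * (s - t₀)) ν t := by
    simpa using ((hasDerivAt_id t).sub_const t₀).const_mul ν
  set u := ν * (t - t₀) with hu
  refine ⟨?_, ?_, ?_⟩
  · have h := ((hdn' u).comp t hin).const_mul a
    refine h.congr_deriv (Eq.symm ?_)
    linear_combination (sn u * cn u) * e1
  · have h := ((hsn' u).comp t hin).const_mul b
    refine h.congr_deriv (Eq.symm ?_)
    linear_combination (-(cn u * dn u)) * e2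
  · have h := ((hcn' u).comp t hin).const_mul c
    refine h.congr_deriv (Eq.symm ?_)
    linear_combination (sn u * dn u) * e3
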